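/- For 0 < α < 1, Re β > 0, and z ∈ ℂ with Re z ≥ 0 (or more restrictively z real positive), ∫_0^∞ x^{β-1} exp(-z x^α - x) dx = ∑_{n=0}^∞ (-1)^n Γ(αn+β) z^n / n!, i.e., the integral representation 𝕃_{α,β}(z) = ∫_0^∞ x^{β-1} e^{-z x^α - x} dx holds. -/

import Mathlib

open Complex MeasureTheory
open Filter Topology

lemma gamma_interp {α b : ℝ} (hα0 : 0 < α) (hα1 : α < 1) (hb : 0 < b) (n : ℕ) :
    Real.Gamma (α * n + b) ≤ Real.Gamma b ^ (1 - α) * Real.Gamma ((n : ℝ) + b) ^ α := by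
  have hb' : (b : ℝ) ∈ Set.Ioi (0:ℝ) := hb
  have hnb : ((n : ℝ) + b) ∈ Set.Ioi (0:ℝ) := by
    simp only [Set.mem_Ioi]; positivity
  have h := Real.convexOn_log_Gamma.2 hb' hnb (by linarith : (0:ℝ) ≤ 1 - α) hα0.le
    (by ring)
  simp only [smul_eq_mul, Function.comp_apply] at h
  have harg : (1 - α) * b + α * ((n : ℝ) + b) = α * n + b := by ring
  rw [harg] at h
  have hg1 : 0 < Real.Gamma (α * n + b) := Real.Gamma_pos_of_pos (by positivity)
  have hg2 : 0 < Real.Gamma b := Real.Gamma_pos_of_pos hb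
  have hg3 : 0 < Real.Gamma ((n : ℝ) + b) := Real.Gamma_pos_of_pos (by positivity)
  calc Real.Gamma (α * n + b) = Real.exp (Real.log (Real.Gamma (α * n + b))) :=
        (Real.exp_log hg1).symm
    _ ≤ Real.exp ((1 - α) * Real.log (Real.Gamma b) + α * Real.log (Real.Gamma ((n:ℝ) + b))) :=
        Real.exp_le_exp.mpr h
    _ = Real.Gamma b ^ (1 - α) * Real.Gamma ((n : ℝ) + b) ^ α := by
        rw [Real.exp_add, Real.rpow_def_of_pos hg2, Real.rpow_def_of_pos hg3,
          mul_comm (Real.log _), mul_comm (Real.log _)]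

lemma summable_aux {α b L : ℝ} (hα0 : 0 < α) (hα1 : α < 1) (hb : 0 < b) (hL : 0 < L) :
    Summable (fun n : ℕ => L ^ n * Real.Gamma (α * n + b) / n.factorial) := by
  set c : ℕ → ℝ := fun n => Real.Gamma b ^ (1 - α) * (L ^ n * Real.Gamma ((n:ℝ) + b) ^ α / n.factorial) with hc
  have hcpos : ∀ n, 0 < c n := by
    intro n
    have := Real.Gamma_pos_of_pos hb
    have h3 : 0 < Real.Gamma ((n:ℝ) + b) := Real.Gamma_pos_of_pos (by positivity)
    have : (0:ℝ) < n.factorial := by positivity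
    positivity
  have hsc : Summable c := by
    -- ratio test
    have hrat : Tendsto (fun n : ℕ => L * ((n:ℝ) + b) ^ α / ((n:ℝ) + 1)) atTop (𝓝 0) := by
      have hbound : ∀ᶠ n : ℕ in atTop, L * ((n:ℝ) + b) ^ α / ((n:ℝ) + 1) ≤
          2 * L * (n:ℝ) ^ (α - 1) := by
        filter_upwards [eventually_ge_atTop (max 1 ⌈b⌉₊)] with n hn
        have hn1 : (1:ℝ) ≤ n := by exact_mod_cast le_trans (le_max_left _ _) hn
        have hnb : b ≤ n := by
          calc b ≤ ⌈b⌉₊ := Nat.le_ceil b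
            _ ≤ n := by exact_mod_cast le_trans (le_max_right _ _) hn
        have h1 : ((n:ℝ) + b) ^ α ≤ (2 * n) ^ α := by
          apply Real.rpow_le_rpow (by positivity) (by linarith) hα0.le
        have h2 : (2 * (n:ℝ)) ^ α ≤ 2 * (n:ℝ) ^ α := by
          rw [Real.mul_rpow (by norm_num) (by positivity)]
          have : (2:ℝ) ^ α ≤ 2 := by
            calc (2:ℝ) ^ α ≤ (2:ℝ) ^ (1:ℝ) :=
              Real.rpow_le_rpow_of_exponent_le (by norm_num) hα1.le
            _ = 2 := by norm_num
          nlinarith [Real.rpow_nonneg (show (0:ℝ) ≤ n by linarith) α]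
        have h3 : (n:ℝ) ≤ (n:ℝ) + 1 := by linarith
        calc L * ((n:ℝ) + b) ^ α / ((n:ℝ) + 1) ≤ L * (2 * (n:ℝ) ^ α) / (n:ℝ) := by
              apply div_le_div₀ (by positivity) (by nlinarith) (by linarith) h3
          _ = 2 * L * ((n:ℝ) ^ α / (n:ℝ)) := by ring
          _ = 2 * L * (n:ℝ) ^ (α - 1) := by
              have hx : (n:ℝ) ^ α / (n:ℝ) = (n:ℝ) ^ (α - 1) := by
                rw [Real.rpow_sub (by linarith), Real.rpow_one]
              rw [hx]
      have hgo : Tendsto (fun n : ℕ => 2 * L * (n:ℝ) ^ (α - 1)) atTop (𝓝 0) := by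
        have : Tendsto (fun x : ℝ => x ^ (-(1 - α))) atTop (𝓝 0) :=
          tendsto_rpow_neg_atTop (by linarith)
        have := ((this.comp (tendsto_natCast_atTop_atTop (R := ℝ))).const_mul (2 * L) : _)
        simpa [mul_zero, Function.comp, show -(1-α) = α - 1 by ring] using this
      have hnonneg : ∀ᶠ n : ℕ in atTop, 0 ≤ L * ((n:ℝ) + b) ^ α / ((n:ℝ) + 1) := by
        filter_upwards with n; positivity
      exact squeeze_zero' hnonneg hbound hgo
    apply summable_of_ratio_norm_eventually_le (r := 1/2) (by norm_num)
    have hev : ∀ᶠ n : ℕ in atTop, L * ((n:ℝ) + b) ^ α / ((n:ℝ) + 1) ≤ 1/2 :=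
      hrat.eventually_le_const (by norm_num)
    filter_upwards [hev] with n hn
    have hcs : c (n + 1) = c n * (L * ((n:ℝ) + b) ^ α / ((n:ℝ) + 1)) := by
      have hGadd : Real.Gamma (((n:ℝ) + 1) + b) = ((n:ℝ) + b) * Real.Gamma ((n:ℝ) + b) := by
        rw [show ((n:ℝ) + 1) + b = ((n:ℝ) + b) + 1 by ring,
          Real.Gamma_add_one (by positivity)]
      have hGpow : Real.Gamma (((n:ℝ)+1) + b) ^ α = ((n:ℝ) + b) ^ α * Real.Gamma ((n:ℝ) + b) ^ α := by
        rw [hGadd, Real.mul_rpow (by positivity) (Real.Gamma_pos_of_pos (by positivity)).le]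
      simp only [hc, Nat.factorial_succ, Nat.cast_add, Nat.cast_one, Nat.cast_mul]
      rw [hGpow]
      field_simp
      ring
    rw [hcs, Real.norm_eq_abs, Real.norm_eq_abs, abs_mul, abs_of_pos (hcpos n)]
    rw [_root_.abs_of_nonneg (show (0:ℝ) ≤ L * ((n:ℝ) + b) ^ α / ((n:ℝ) + 1) by positivity)]
    calc c n * (L * ((n:ℝ) + b) ^ α / ((n:ℝ) + 1)) ≤ c n * (1/2) :=
          mul_le_mul_of_nonneg_left hn (hcpos n).le
      _ = 1/2 * c n := by ring
  apply Summable.of_nonneg_of_le _ _ hsc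
  · intro n
    have : (0:ℝ) < n.factorial := by positivity
    have := Real.Gamma_pos_of_pos (show (0:ℝ) < α * n + b by positivity)
    positivity
  · intro n
    have : (0:ℝ) < n.factorial := by positivity
    have hint := gamma_interp hα0 hα1 hb n
    simp only [hc]
    rw [div_le_iff₀ this] at *
    calc L ^ n * Real.Gamma (α * n + b)
        ≤ L ^ n * (Real.Gamma b ^ (1-α) * Real.Gamma ((n:ℝ) + b) ^ α) := by
          apply mul_le_mul_of_nonneg_left hint (by positivity)
      _ = Real.Gamma b ^ (1-α) * (L ^ n * Real.Gamma ((n:ℝ)+b) ^ α / n.factorial) * n.factorial := by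
          field_simp

/-- Integral representation of `𝕃_{α,β}`: for `0 < α < 1`, `Re β > 0`, `Re z ≥ 0`,
`∫_0^∞ x^{β-1} exp(-z x^α - x) dx = ∑ (-1)^n Γ(αn+β) z^n / n!`. -/
theorem stmt_1 (α : ℝ) (β z : ℂ) (hα0 : 0 < α) (hα1 : α < 1) (hβ : 0 < β.re)
    (hz : 0 ≤ z.re) :
    ∫ x in Set.Ioi (0 : ℝ), (x : ℂ) ^ (β - 1) *
        Complex.exp (-z * (x : ℂ) ^ (α : ℂ) - x)
      = ∑' n : ℕ, ((-1 : ℂ) ^ n * Complex.Gamma ((α : ℂ) * n + β) / (n.factorial : ℂ)) * z ^ n := by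
  set F : ℕ → ℝ → ℂ := fun n x =>
    (x:ℂ) ^ (β - 1) * ((-z * (x:ℂ) ^ (α:ℂ)) ^ n / n.factorial) * Complex.exp (-(x:ℂ)) with hF
  have hs : ∀ n : ℕ, 0 < ((α:ℂ) * n + β).re := by
    intro n
    simp only [Complex.add_re, Complex.mul_re, Complex.ofReal_re, Complex.ofReal_im,
      Complex.natCast_re, Complex.natCast_im]
    have : (0:ℝ) ≤ α * n := by positivity
    simp only [mul_zero, zero_mul, sub_zero]
    linarith
  have hxcpow : ∀ (x : ℝ), 0 < x → ∀ n : ℕ, ((x:ℂ) ^ (α:ℂ)) ^ n = (x:ℂ) ^ ((α:ℂ) * n) := by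
    intro x hx n
    rw [← Complex.ofReal_cpow hx.le, ← Complex.ofReal_pow, ← Real.rpow_natCast (x ^ α) n,
      ← Real.rpow_mul hx.le, Complex.ofReal_cpow hx.le]
    push_cast
    ring_nf
  have hFeq : ∀ n : ℕ, Set.EqOn (F n)
      (fun x : ℝ => ((-z) ^ n / n.factorial) • (↑(Real.exp (-x)) * (x:ℂ) ^ ((α:ℂ) * n + β - 1)))
      (Set.Ioi 0) := by
    intro n x hx
    have hx : (0:ℝ) < x := hx
    have hx0 : (x:ℂ) ≠ 0 := Complex.ofReal_ne_zero.mpr hx.ne'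
    simp only [hF, smul_eq_mul]
    rw [mul_pow, hxcpow x hx n,
      show (α:ℂ) * n + β - 1 = (β - 1) + (α:ℂ) * n by ring,
      Complex.cpow_add _ _ hx0, Complex.ofReal_exp, Complex.ofReal_neg]
    ring
  have hF_int : ∀ n : ℕ, Integrable (F n) (volume.restrict (Set.Ioi 0)) := by
    intro n
    have h1 := (Complex.GammaIntegral_convergent (hs n)).smul ((-z) ^ n / (n.factorial : ℂ))
    exact MeasureTheory.IntegrableOn.congr_fun h1 (fun x hx => ((hFeq n) hx).symm)
      measurableSet_Ioi
  have hFint_val : ∀ n : ℕ, ∫ x in Set.Ioi (0:ℝ), F n x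
      = ((-z) ^ n / n.factorial) * Complex.Gamma ((α:ℂ) * n + β) := by
    intro n
    rw [setIntegral_congr_fun measurableSet_Ioi (hFeq n), integral_smul, smul_eq_mul]
    congr 1
    rw [Complex.Gamma_eq_integral (hs n)]
    rfl
  have hnorm : ∀ n : ℕ, ∫ x in Set.Ioi (0:ℝ), ‖F n x‖
      = ‖z‖ ^ n * Real.Gamma (α * n + β.re) / n.factorial := by
    intro n
    have heq : Set.EqOn (fun x : ℝ => ‖F n x‖)
        (fun x : ℝ => (‖z‖ ^ n / n.factorial) * (Real.exp (-x) * x ^ (α * n + β.re - 1)))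
        (Set.Ioi 0) := by
      intro x hx
      have hx : (0:ℝ) < x := hx
      simp only [hF, norm_mul, norm_div, norm_pow, map_mul, norm_neg,
        Complex.norm_exp, Complex.norm_natCast, Complex.norm_cpow_eq_rpow_re_of_pos hx]
      rw [Complex.sub_re, Complex.one_re, Complex.ofReal_re, Complex.neg_re, Complex.ofReal_re]
      have h1 : (‖z‖ * x ^ α) ^ n = ‖z‖ ^ n * x ^ (α * (n:ℝ)) := by
        rw [mul_pow, ← Real.rpow_natCast (x ^ α) n, ← Real.rpow_mul hx.le]
      rw [h1]
      rw [show α * (n:ℝ) + β.re - 1 = (β.re - 1) + α * (n:ℝ) by ring, Real.rpow_add hx]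
      ring
    rw [setIntegral_congr_fun measurableSet_Ioi heq, MeasureTheory.integral_const_mul,
      ← Real.Gamma_eq_integral (by positivity : (0:ℝ) < α * n + β.re)]
    ring
  have hsum : Summable (fun n : ℕ => ∫ x in Set.Ioi (0:ℝ), ‖F n x‖) := by
    rw [funext hnorm]
    have hmain := summable_aux hα0 hα1 hβ (show (0:ℝ) < ‖z‖ + 1 by positivity)
    apply Summable.of_nonneg_of_le _ _ hmain
    · intro n
      have h1 : (0:ℝ) < n.factorial := by positivity
      have h2 := Real.Gamma_pos_of_pos (show (0:ℝ) < α * n + β.re by positivity)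
      positivity
    · intro n
      have h1 : (0:ℝ) < n.factorial := by positivity
      have h2 := Real.Gamma_pos_of_pos (show (0:ℝ) < α * n + β.re by positivity)
      gcongr
      linarith [norm_nonneg z]
  have hswap := MeasureTheory.integral_tsum_of_summable_integral_norm hF_int hsum
  have hts : ∀ x ∈ Set.Ioi (0:ℝ), ∑' n : ℕ, F n x
      = (x:ℂ) ^ (β - 1) * Complex.exp (-z * (x:ℂ) ^ (α:ℂ) - x) := by
    intro x hx
    calc ∑' n : ℕ, F n x
        = ∑' n : ℕ, ((x:ℂ) ^ (β - 1) * Complex.exp (-(x:ℂ))) *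
            ((-z * (x:ℂ) ^ (α:ℂ)) ^ n / n.factorial) :=
          tsum_congr fun n => by simp only [hF]; ring
      _ = ((x:ℂ) ^ (β - 1) * Complex.exp (-(x:ℂ))) *
            ∑' n : ℕ, (-z * (x:ℂ) ^ (α:ℂ)) ^ n / n.factorial := tsum_mul_left
      _ = ((x:ℂ) ^ (β - 1) * Complex.exp (-(x:ℂ))) * Complex.exp (-z * (x:ℂ) ^ (α:ℂ)) := by
          rw [Complex.exp_eq_exp_ℂ, NormedSpace.exp_eq_tsum_div]
      _ = (x:ℂ) ^ (β - 1) * Complex.exp (-z * (x:ℂ) ^ (α:ℂ) - x) := by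
          rw [mul_assoc, ← Complex.exp_add]
          ring_nf
  calc ∫ x in Set.Ioi (0:ℝ), (x : ℂ) ^ (β - 1) * Complex.exp (-z * (x : ℂ) ^ (α : ℂ) - x)
      = ∫ x in Set.Ioi (0:ℝ), ∑' n : ℕ, F n x :=
        setIntegral_congr_fun measurableSet_Ioi fun x hx => (hts x hx).symm
    _ = ∑' n : ℕ, ∫ x in Set.Ioi (0:ℝ), F n x := hswap.symm
    _ = ∑' n : ℕ, ((-1 : ℂ) ^ n * Complex.Gamma ((α : ℂ) * n + β) / (n.factorial : ℂ)) * z ^ n := by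
        refine tsum_congr fun n => ?_
        rw [hFint_val n, neg_pow]
        ring
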